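/- For every u in the open strip Δ₀ = {u ∈ ℂ : |Im u| < √3/2}, the complex line integral of v/(v² − v + 1) along the straight segment from u to 1 equals −√3·π/9 − ((3 − √3·i)/6)·Log(u − u₀) − ((3 + √3·i)/6)·Log(u − conj(u₀)), where Log denotes the principal branch of the complex logarithm. In particular this expression defines an analytic extension of T₀ (from [0,∞)) to Δ₀. -/

import Mathlib

/-- The function `T₀` from the paper. -/
noncomputable def T0 (s : ℝ) : ℝ :=
  -(Real.sqrt 3 / 3) * (Real.arctan ((2 * s - 1) / Real.sqrt 3) - Real.pi / 6)
    - Real.log (s ^ 2 - s + 1) / 2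

/-- The point `u₀ = (1 + √3 i)/2`. -/
noncomputable def u0 : ℂ := (1 + Real.sqrt 3 * Complex.I) / 2

/-- The complex line integral of `v/(v² − v + 1)` along the straight segment from `u` to `1`. -/
noncomputable def Ttilde (u : ℂ) : ℂ :=
  ∫ t in (0 : ℝ)..1,
    (1 - u) * ((u + (t : ℂ) * (1 - u)) /
      ((u + (t : ℂ) * (1 - u)) ^ 2 - (u + (t : ℂ) * (1 - u)) + 1))

open Complex Real

/-- The conjugate root `(1 - √3 i)/2`. -/
noncomputable def ub : ℂ := (1 - Real.sqrt 3 * Complex.I) / 2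
/-- Partial-fraction coefficient at `u0`. -/
noncomputable def ca : ℂ := (3 - Real.sqrt 3 * Complex.I) / 6
/-- Partial-fraction coefficient at `ub`. -/
noncomputable def cb : ℂ := (3 + Real.sqrt 3 * Complex.I) / 6

lemma hr3 : (Real.sqrt 3 : ℂ) * (Real.sqrt 3 : ℂ) = 3 := by
  rw [← Complex.ofReal_mul]; norm_num [Real.mul_self_sqrt]

lemma sqrt3_pos : (0:ℝ) < Real.sqrt 3 := Real.sqrt_pos.mpr (by norm_num)

lemma conj_u0_eq : (starRingEnd ℂ) u0 = ub := by
  simp only [u0, ub, map_div₀, map_add, map_one, map_mul, Complex.conj_I, Complex.conj_ofReal,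
    map_ofNat]
  ring

lemma quadFactor (v : ℂ) : (v - u0) * (v - ub) = v ^ 2 - v + 1 := by
  simp only [u0, ub]
  linear_combination ((1:ℂ)/4) * hr3 - ((Real.sqrt 3:ℂ)*(Real.sqrt 3:ℂ)/4) * Complex.I_sq

lemma sum_ab : ca + cb = 1 := by simp only [ca, cb]; ring

lemma mix_ab : ca * ub + cb * u0 = 0 := by
  simp only [ca, cb, u0, ub]
  linear_combination (-(1:ℂ)/6) * hr3 + ((Real.sqrt 3:ℂ)*(Real.sqrt 3:ℂ)/6) * Complex.I_sq

lemma numer (v : ℂ) : ca * (v - ub) + cb * (v - u0) = v := by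
  linear_combination v * sum_ab - mix_ab

lemma partialFrac {v : ℂ} (h1 : v - u0 ≠ 0) (h2 : v - ub ≠ 0) :
    v / (v ^ 2 - v + 1) = ca / (v - u0) + cb / (v - ub) := by
  rw [div_add_div _ _ h1 h2, ← quadFactor, mul_comm (v - u0) cb, numer]

section
variable {u : ℂ} (hu : |u.im| < Real.sqrt 3 / 2)

include hu in
lemma im_gamma {t : ℝ} (ht : t ∈ Set.Icc (0:ℝ) 1) :
    |(u + (t : ℂ) * (1 - u)).im| < Real.sqrt 3 / 2 := by
  have h : (u + (t : ℂ) * (1 - u)).im = (1 - t) * u.im := by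
    simp [Complex.add_im, Complex.mul_im, Complex.sub_im]
    ring
  rw [h, abs_mul]
  calc |1 - t| * |u.im| ≤ 1 * |u.im| := by
        apply mul_le_mul_of_nonneg_right _ (abs_nonneg _)
        rw [abs_le]; constructor <;> [linarith [ht.2]; linarith [ht.1]]
    _ < Real.sqrt 3 / 2 := by rwa [one_mul]

lemma slit1 {v : ℂ} (hv : |v.im| < Real.sqrt 3 / 2) : v - u0 ∈ Complex.slitPlane := by
  rw [Complex.mem_slitPlane_iff]
  right
  have : (v - u0).im = v.im - Real.sqrt 3 / 2 := by simp [u0]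
  rw [this]
  have := abs_lt.mp hv
  linarith [this.2]

lemma slit2 {v : ℂ} (hv : |v.im| < Real.sqrt 3 / 2) : v - ub ∈ Complex.slitPlane := by
  rw [Complex.mem_slitPlane_iff]
  right
  have : (v - ub).im = v.im + Real.sqrt 3 / 2 := by simp [ub]; ring
  rw [this]
  have := abs_lt.mp hv
  linarith [this.1]

lemma ne1 {v : ℂ} (hv : |v.im| < Real.sqrt 3 / 2) : v - u0 ≠ 0 :=
  Complex.slitPlane_ne_zero (slit1 hv)
lemma ne2 {v : ℂ} (hv : |v.im| < Real.sqrt 3 / 2) : v - ub ≠ 0 :=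
  Complex.slitPlane_ne_zero (slit2 hv)

lemma denom_ne {v : ℂ} (hv : |v.im| < Real.sqrt 3 / 2) : v ^ 2 - v + 1 ≠ 0 := by
  rw [← quadFactor]; exact mul_ne_zero (ne1 hv) (ne2 hv)

include hu in
lemma key_integral :
    Ttilde u = (ca * Complex.log (1 - u0) + cb * Complex.log (1 - ub))
      - (ca * Complex.log (u - u0) + cb * Complex.log (u - ub)) := by
  set γ : ℝ → ℂ := fun t => u + (t : ℂ) * (1 - u) with hγ
  have hγmem : ∀ t ∈ Set.Icc (0:ℝ) 1, |(γ t).im| < Real.sqrt 3 / 2 := fun t ht => im_gamma hu ht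
  have hderivγ : ∀ t : ℝ, HasDerivAt γ (1 - u) t := by
    intro t
    have h1 : HasDerivAt (fun t : ℝ => (t : ℂ)) 1 t := Complex.ofRealCLM.hasDerivAt
    simpa [hγ] using (h1.mul_const (1 - u)).const_add u
  set g : ℝ → ℂ := fun t => ca * Complex.log (γ t - u0) + cb * Complex.log (γ t - ub) with hg
  have hderivg : ∀ t ∈ Set.uIcc (0:ℝ) 1, HasDerivAt g
      ((1 - u) * (γ t / ((γ t) ^ 2 - γ t + 1))) t := by
    intro t ht
    rw [Set.uIcc_of_le (by norm_num : (0:ℝ) ≤ 1)] at ht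
    have hmem := hγmem t ht
    have hd1 : HasDerivAt (fun s => Complex.log (γ s - u0)) ((γ t - u0)⁻¹ * (1 - u)) t := by
      have := (Complex.hasDerivAt_log (slit1 hmem)).comp t (((hderivγ t).sub_const u0))
      exact this
    have hd2 : HasDerivAt (fun s => Complex.log (γ s - ub)) ((γ t - ub)⁻¹ * (1 - u)) t := by
      have := (Complex.hasDerivAt_log (slit2 hmem)).comp t (((hderivγ t).sub_const ub))
      exact this
    have := ((hd1.const_mul ca).add (hd2.const_mul cb))
    refine HasDerivAt.congr_deriv this ?_
    rw [partialFrac (ne1 hmem) (ne2 hmem)]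
    field_simp
  have hcont : ContinuousOn (fun t : ℝ => (1 - u) * (γ t / ((γ t) ^ 2 - γ t + 1)))
      (Set.uIcc (0:ℝ) 1) := by
    rw [Set.uIcc_of_le (by norm_num : (0:ℝ) ≤ 1)]
    have hγc : Continuous γ := by
      apply Continuous.add continuous_const
      exact (Complex.continuous_ofReal).mul continuous_const
    apply ContinuousOn.mul continuousOn_const
    apply ContinuousOn.div (hγc.continuousOn)
    · exact ((hγc.pow 2).sub hγc |>.add continuous_const).continuousOn
    · intro t ht
      exact denom_ne (hγmem t ht)
  have := intervalIntegral.integral_eq_sub_of_hasDerivAt hderivg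
    (hcont.intervalIntegrable)
  simp only [hg, hγ] at this
  rw [Ttilde, this]
  norm_num

end

lemma log_one_sub_u0 : Complex.log (1 - u0) = ((-(Real.pi / 3) : ℝ) : ℂ) * Complex.I := by
  have h : (1 : ℂ) - u0 = Complex.exp (((-(Real.pi / 3) : ℝ) : ℂ) * Complex.I) := by
    rw [Complex.exp_mul_I, ← Complex.ofReal_cos, ← Complex.ofReal_sin]
    rw [Real.cos_neg, Real.sin_neg, Real.cos_pi_div_three, Real.sin_pi_div_three]
    apply Complex.ext <;> simp [u0] <;> ring
  rw [h, Complex.log_exp]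
  · simp [Complex.mul_im]; linarith [Real.pi_pos]
  · simp [Complex.mul_im]; linarith [Real.pi_pos]

lemma log_one_sub_ub : Complex.log (1 - ub) = (((Real.pi / 3) : ℝ) : ℂ) * Complex.I := by
  have h : (1 : ℂ) - ub = Complex.exp ((((Real.pi / 3) : ℝ) : ℂ) * Complex.I) := by
    rw [Complex.exp_mul_I, ← Complex.ofReal_cos, ← Complex.ofReal_sin]
    rw [Real.cos_pi_div_three, Real.sin_pi_div_three]
    apply Complex.ext <;> simp [ub] <;> ring
  rw [h, Complex.log_exp]
  · simp [Complex.mul_im]; linarith [Real.pi_pos]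
  · simp [Complex.mul_im]; linarith [Real.pi_pos]

lemma const_val : ca * Complex.log (1 - u0) + cb * Complex.log (1 - ub)
    = ((-(Real.sqrt 3 * Real.pi / 9) : ℝ) : ℂ) := by
  rw [log_one_sub_u0, log_one_sub_ub]
  simp only [ca, cb]
  apply Complex.ext <;>
    simp [Complex.div_re, Complex.div_im, Complex.normSq, Complex.add_im, Complex.mul_im,
      Complex.mul_re] <;> ring

/-- Part 1 of the statement. -/
lemma part1 {u : ℂ} (hu : |u.im| < Real.sqrt 3 / 2) :
    Ttilde u = ((-(Real.sqrt 3 * Real.pi / 9) : ℝ) : ℂ)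
        - ((3 - Real.sqrt 3 * Complex.I) / 6) * Complex.log (u - u0)
        - ((3 + Real.sqrt 3 * Complex.I) / 6) * Complex.log (u - (starRingEnd ℂ) u0) := by
  rw [key_integral hu, const_val, conj_u0_eq]
  show _ = _ - ca * _ - cb * _
  ring

/-- Part 2: differentiability. -/
lemma part2 : DifferentiableOn ℂ Ttilde {u : ℂ | |u.im| < Real.sqrt 3 / 2} := by
  have hF : DifferentiableOn ℂ (fun u : ℂ => ((-(Real.sqrt 3 * Real.pi / 9) : ℝ) : ℂ)
      - ((3 - Real.sqrt 3 * Complex.I) / 6) * Complex.log (u - u0)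
      - ((3 + Real.sqrt 3 * Complex.I) / 6) * Complex.log (u - (starRingEnd ℂ) u0))
      {u : ℂ | |u.im| < Real.sqrt 3 / 2} := by
    intro u hu
    have hu' : |u.im| < Real.sqrt 3 / 2 := hu
    apply DifferentiableAt.differentiableWithinAt
    have h1 : DifferentiableAt ℂ (fun u : ℂ => Complex.log (u - u0)) u := by
      exact (Complex.differentiableAt_log (slit1 hu')).comp u
        ((differentiableAt_id.sub_const u0))
    have h2 : DifferentiableAt ℂ (fun u : ℂ => Complex.log (u - (starRingEnd ℂ) u0)) u := by
      rw [conj_u0_eq]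
      exact (Complex.differentiableAt_log (slit2 hu')).comp u
        ((differentiableAt_id.sub_const ub))
    exact ((differentiableAt_const _).sub (h1.const_mul _)).sub (h2.const_mul _)
  exact hF.congr fun u hu => part1 hu

lemma Qpos (s : ℝ) : 0 < s ^ 2 - s + 1 := by nlinarith [sq_nonneg (s - 1/2)]

lemma sqrt_1px (s : ℝ) :
    Real.sqrt (1 + ((2*s-1)/Real.sqrt 3) ^ 2) = 2 * Real.sqrt (s ^ 2 - s + 1) / Real.sqrt 3 := by
  have hQ := (Qpos s).le
  have h3 : Real.sqrt 3 ^ 2 = 3 := Real.sq_sqrt (by norm_num)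
  rw [show 1 + ((2*s-1)/Real.sqrt 3) ^ 2 = (2 * Real.sqrt (s ^ 2 - s + 1) / Real.sqrt 3) ^ 2 by
    rw [div_pow, div_pow, mul_pow, Real.sq_sqrt hQ, h3]; ring]
  exact Real.sqrt_sq (by positivity)

lemma abs_s_sub_u0 (s : ℝ) : ‖(s : ℂ) - u0‖ = Real.sqrt (s ^ 2 - s + 1) := by
  have h3 : Real.sqrt 3 ^ 2 = 3 := Real.sq_sqrt (by norm_num)
  rw [Complex.norm_def, Complex.normSq_apply]
  have hre : ((s : ℂ) - u0).re = s - 1/2 := by norm_num [u0]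
  have him : ((s : ℂ) - u0).im = -(Real.sqrt 3 / 2) := by simp [u0]
  rw [hre, him]
  rw [show (s - 1/2) * (s - 1/2) + -(Real.sqrt 3/2) * -(Real.sqrt 3/2) = s^2 - s + 1 by
    nlinarith [h3]]

lemma arg_s_sub_u0 (s : ℝ) :
    Complex.arg ((s : ℂ) - u0) = Real.arctan ((2*s-1)/Real.sqrt 3) - Real.pi / 2 := by
  set x := (2*s-1)/Real.sqrt 3 with hx
  set θ := Real.arctan x - Real.pi / 2 with hθ
  have hθIoc : θ ∈ Set.Ioc (-Real.pi) Real.pi := by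
    constructor
    · have := Real.neg_pi_div_two_lt_arctan x; rw [hθ]; linarith
    · have := Real.arctan_lt_pi_div_two x; rw [hθ]; linarith [Real.pi_pos]
  have hR : (0:ℝ) < Real.sqrt (s ^ 2 - s + 1) := Real.sqrt_pos.mpr (Qpos s)
  have key : ((s : ℂ) - u0) =
      (Real.sqrt (s ^ 2 - s + 1) : ℝ) * (Complex.cos θ + Complex.sin θ * Complex.I) := by
    have hcos : Real.cos θ = Real.sin (Real.arctan x) := by
      rw [hθ, show Real.arctan x - Real.pi/2 = -(Real.pi/2 - Real.arctan x) by ring,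
        Real.cos_neg, Real.cos_pi_div_two_sub]
    have hsin : Real.sin θ = -Real.cos (Real.arctan x) := by
      rw [hθ, show Real.arctan x - Real.pi/2 = -(Real.pi/2 - Real.arctan x) by ring,
        Real.sin_neg, Real.sin_pi_div_two_sub]
    have hQne : Real.sqrt (s ^ 2 - s + 1) ≠ 0 := ne_of_gt hR
    have h3ne : Real.sqrt 3 ≠ 0 := ne_of_gt sqrt3_pos
    have hre : Real.sqrt (s ^ 2 - s + 1) * Real.cos θ = s - 1/2 := by
      rw [hcos, Real.sin_arctan, sqrt_1px]
      have h1 : x * Real.sqrt 3 = 2*s - 1 := by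
        rw [hx]; field_simp
      rw [hx]
      generalize Real.sqrt (s ^ 2 - s + 1) = q at hQne ⊢
      field_simp
    have him : Real.sqrt (s ^ 2 - s + 1) * Real.sin θ = -(Real.sqrt 3/2) := by
      rw [hsin, Real.cos_arctan, sqrt_1px]
      generalize Real.sqrt (s ^ 2 - s + 1) = q at hQne ⊢
      field_simp
    have hmain : (Real.sqrt (s ^ 2 - s + 1) : ℂ) * (↑(Real.cos θ) + ↑(Real.sin θ) * Complex.I)
        = ↑(s - 1/2) + ↑(-(Real.sqrt 3/2)) * Complex.I := by
      rw [← hre, ← him]; push_cast; ring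
    rw [← Complex.ofReal_cos, ← Complex.ofReal_sin, hmain, u0]
    push_cast
    ring
  rw [key, Complex.arg_mul_cos_add_sin_mul_I hR hθIoc]

/-- Part 3: agreement with `T0` on the nonnegative reals. -/
lemma part3 (s : ℝ) : Ttilde (s : ℂ) = ((T0 s : ℝ) : ℂ) := by
  have hs : |(s : ℂ).im| < Real.sqrt 3 / 2 := by
    simp [sqrt3_pos]
  rw [part1 hs]
  have hlog : Complex.log ((s : ℂ) - u0)
      = ↑(Real.log (s ^ 2 - s + 1) / 2)
        + ↑(Real.arctan ((2*s-1)/Real.sqrt 3) - Real.pi / 2) * Complex.I := by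
    rw [Complex.log, abs_s_sub_u0, arg_s_sub_u0, Real.log_sqrt (Qpos s).le]
  have hconj : (s : ℂ) - (starRingEnd ℂ) u0 = (starRingEnd ℂ) ((s : ℂ) - u0) := by
    rw [map_sub, Complex.conj_ofReal]
  have hargne : Complex.arg ((s : ℂ) - u0) ≠ Real.pi := by
    rw [arg_s_sub_u0]
    have := Real.arctan_lt_pi_div_two ((2*s-1)/Real.sqrt 3)
    intro h
    have := Real.pi_pos
    linarith [h ▸ (by linarith : Real.arctan ((2*s-1)/Real.sqrt 3) - Real.pi / 2 < Real.pi / 2)]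
  have hlog2 : Complex.log ((s : ℂ) - (starRingEnd ℂ) u0)
      = ↑(Real.log (s ^ 2 - s + 1) / 2)
        - ↑(Real.arctan ((2*s-1)/Real.sqrt 3) - Real.pi / 2) * Complex.I := by
    rw [hconj, Complex.log_conj _ hargne, hlog, map_add, map_mul, Complex.conj_ofReal,
      Complex.conj_ofReal, Complex.conj_I]
    ring
  rw [hlog, hlog2, T0]
  apply Complex.ext <;>
    simp [Complex.div_re, Complex.div_im, Complex.normSq, Complex.add_im, Complex.mul_im,
      Complex.mul_re, Complex.sub_re, Complex.sub_im] <;> ring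

/-- for `u` in the strip `Δ₀ = {u : |Im u| < √3/2}`, the segment integral of
`v/(v² − v + 1)` from `u` to `1` equals
`−√3·π/9 − ((3 − √3 i)/6)·Log(u − u₀) − ((3 + √3 i)/6)·Log(u − conj u₀)`;
this expression is an analytic extension of `T₀` to `Δ₀`. -/
theorem Ttilde_eq_log_formula :
    (∀ u : ℂ, |u.im| < Real.sqrt 3 / 2 →
      Ttilde u = ((-(Real.sqrt 3 * Real.pi / 9) : ℝ) : ℂ)
        - ((3 - Real.sqrt 3 * Complex.I) / 6) * Complex.log (u - u0)
        - ((3 + Real.sqrt 3 * Complex.I) / 6) * Complex.log (u - (starRingEnd ℂ) u0)) ∧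
    DifferentiableOn ℂ Ttilde {u : ℂ | |u.im| < Real.sqrt 3 / 2} ∧
    (∀ s : ℝ, 0 ≤ s → Ttilde (s : ℂ) = ((T0 s : ℝ) : ℂ)) := by
  exact ⟨fun u hu => part1 hu, part2, fun s _ => part3 s⟩
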